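/- Matrix elements of the B-operator of the t-deformed boson model: let M ≥ 1, N ≥ 0, t, β, v ∈ ℂ, and let m ∈ ℕ^M with ∑ m_j = N+1 and n ∈ ℕ^M with ∑ n_j = N. Then (i) ⟨m| B(v) |n⟩ = 0 unless 0 ≤ ∑_{k=j}^M m_k − ∑_{k=j}^M n_k ≤ 1 for all 1 ≤ j ≤ M (admissibility); and (ii) if m and n are admissible, let p₁ < ⋯ < p_r be the indices p with m_p = n_p + 1 and q₁ < ⋯ < q_{r−1} the indices q with m_q + 1 = n_q, and set q_r = M+1; then ⟨m| B(v) |n⟩ = v^{∑_{j=1}^r p_j − ∑_{j=1}^{r−1} q_j} · ∏_{j=1}^r (1 − t^{n_{p_j}+1}) · ∏_{j=1}^r ∏_{k=p_j+1}^{q_j−1} (1 − βv t^{n_k}). -/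

import Mathlib

noncomputable section

/-- The space ℂ²_a ⊗ F^{⊗M}, where F is the Fock space of finitely supported
functions ℕ → ℂ, realized as finitely supported functions on the basis index
set (Fin 2) × (Fin M → ℕ). -/
abbrev AuxFock (M : ℕ) : Type := (Fin 2 × (Fin M → ℕ)) →₀ ℂ

/-- The t-boson L-operator L(v) = [[1 − βv·t^N, v·B†],[B, v·id]] acting on the
auxiliary space ℂ²_a and the j-th Fock factor of F^{⊗M}. -/
def LsiteBoson (M : ℕ) (t β v : ℂ) (j : Fin M) :
    Module.End ℂ (AuxFock M) :=
  Finsupp.lift (AuxFock M) ℂ (Fin 2 × (Fin M → ℕ))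
    (fun p =>
      if p.1 = 0 then
        (1 - β * v * t ^ (p.2 j)) • Finsupp.single ((0 : Fin 2), p.2) (1 : ℂ) +
          (if p.2 j = 0 then 0 else
            Finsupp.single ((1 : Fin 2), Function.update p.2 j (p.2 j - 1)) (1 : ℂ))
      else
        (v * (1 - t ^ (p.2 j + 1))) •
            Finsupp.single ((0 : Fin 2), Function.update p.2 j (p.2 j + 1)) (1 : ℂ) +
          v • Finsupp.single ((1 : Fin 2), p.2) (1 : ℂ))

/-- The monodromy matrix T_a(v) = L_{aM}(v) ∘ ⋯ ∘ L_{a1}(v) (site 1 acts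
first) of the t-deformed boson model. -/
def TmonoBoson (M : ℕ) (t β v : ℂ) : Module.End ℂ (AuxFock M) :=
  (List.ofFn fun k : Fin M => LsiteBoson M t β v k.rev).prod

/-- The matrix element ⟨m| B(v) |n⟩ of B(v) = ⟨0|_a T_a(v) |1⟩_a. -/
def Belem (M : ℕ) (t β v : ℂ) (m n : Fin M → ℕ) : ℂ :=
  (TmonoBoson M t β v (Finsupp.single ((1 : Fin 2), n) (1 : ℂ))) ((0 : Fin 2), m)

/-- The admissibility condition on a pair of particle configurations. -/
def Admissible (M : ℕ) (m n : Fin M → ℕ) : Prop :=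
  ∀ j : Fin M,
    (∑ k ∈ Finset.Ici j, n k) ≤ (∑ k ∈ Finset.Ici j, m k) ∧
      (∑ k ∈ Finset.Ici j, m k) ≤ (∑ k ∈ Finset.Ici j, n k) + 1

namespace TB

variable {M : ℕ} (t β v : ℂ)

/-- partial product of L-operators over sites j, j+1, ..., M-1. -/
def Q (j : ℕ) : Module.End ℂ (AuxFock M) :=
  ((List.ofFn fun k : Fin M => LsiteBoson M t β v k.rev).take (M - j)).prod

lemma Q_top : Q (M := M) t β v M = 1 := by
  simp [Q]

lemma Q_zero : Q (M := M) t β v 0 = TmonoBoson M t β v := by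
  rw [Q, TmonoBoson, Nat.sub_zero, List.take_of_length_le (by simp)]

lemma Q_succ {j : ℕ} (h : j < M) :
    Q (M := M) t β v j = Q t β v (j + 1) * LsiteBoson M t β v ⟨j, h⟩ := by
  set l := List.ofFn fun k : Fin M => LsiteBoson M t β v k.rev with hl
  have hlen : l.length = M := by simp [hl]
  have h2 : M - (j+1) < l.length := by omega
  have h1 : M - j = (M - (j+1)) + 1 := by omega
  have h3 : l.take (M - j) = l.take (M - (j+1)) ++ [l[M - (j+1)]] := by
    rw [h1, ← List.take_concat_get h2, List.concat_eq_append]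
  rw [Q, Q, h3, List.prod_append, List.prod_singleton]
  congr 1
  have : l[M - (j+1)] = LsiteBoson M t β v (Fin.rev ⟨M - (j+1), by omega⟩) := by
    simp [hl]
  rw [this]
  congr 1
  ext
  simp [Fin.rev]
  omega

/-- the set of basis points whose configuration agrees with s below level j -/
def Aset (M : ℕ) (s : Fin M → ℕ) (j : ℕ) : Set (Fin 2 × (Fin M → ℕ)) :=
  {pt | ∀ i : Fin M, (i : ℕ) < j → pt.2 i = s i}

lemma L_apply (x : AuxFock M) (j : Fin M) :
    LsiteBoson M t β v j x = x.sum fun p c => c •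
      (if p.1 = 0 then
        (1 - β * v * t ^ (p.2 j)) • Finsupp.single ((0 : Fin 2), p.2) (1 : ℂ) +
          (if p.2 j = 0 then 0 else
            Finsupp.single ((1 : Fin 2), Function.update p.2 j (p.2 j - 1)) (1 : ℂ))
      else
        (v * (1 - t ^ (p.2 j + 1))) •
            Finsupp.single ((0 : Fin 2), Function.update p.2 j (p.2 j + 1)) (1 : ℂ) +
          v • Finsupp.single ((1 : Fin 2), p.2) (1 : ℂ)) := by
  rw [LsiteBoson, Finsupp.lift_apply]

lemma L_mem_supported {j : ℕ} (k : Fin M) (hk : j ≤ (k : ℕ)) (s : Fin M → ℕ)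
    (x : AuxFock M) (hx : x ∈ Finsupp.supported ℂ ℂ (Aset M s j)) :
    LsiteBoson M t β v k x ∈ Finsupp.supported ℂ ℂ (Aset M s j) := by
  rw [L_apply]
  apply Submodule.finsuppSum_mem
  intro p hp
  have hpA : p ∈ Aset M s j := hx (Finsupp.mem_support_iff.mpr hp)
  have hupd : ∀ (w : ℕ) (a : Fin 2), ((a, Function.update p.2 k w) : Fin 2 × (Fin M → ℕ)) ∈ Aset M s j := by
    intro w a i hi
    have : i ≠ k := by intro hik; subst hik; omega
    simp only [Function.update_of_ne this]
    exact hpA i hi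
  have hsame : ∀ a : Fin 2, ((a, p.2) : Fin 2 × (Fin M → ℕ)) ∈ Aset M s j := fun a i hi => hpA i hi
  apply Submodule.smul_mem
  split_ifs with h1 h2
  · exact Submodule.add_mem _
      (Submodule.smul_mem _ _ (Finsupp.single_mem_supported ℂ 1 (hsame 0)))
      (Submodule.zero_mem _)
  · exact Submodule.add_mem _
      (Submodule.smul_mem _ _ (Finsupp.single_mem_supported ℂ 1 (hsame 0)))
      (Finsupp.single_mem_supported ℂ 1 (hupd _ 1))
  · exact Submodule.add_mem _
      (Submodule.smul_mem _ _ (Finsupp.single_mem_supported ℂ 1 (hupd _ 0)))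
      (Submodule.smul_mem _ _ (Finsupp.single_mem_supported ℂ 1 (hsame 1)))

lemma Q_mem_supported {j : ℕ} (s : Fin M → ℕ)
    (x : AuxFock M) (hx : x ∈ Finsupp.supported ℂ ℂ (Aset M s j)) :
    Q (M := M) t β v j x ∈ Finsupp.supported ℂ ℂ (Aset M s j) := by
  have key : ∀ d jj, M = jj + d → j ≤ jj → ∀ y ∈ Finsupp.supported ℂ ℂ (Aset M s j),
      Q (M := M) t β v jj y ∈ Finsupp.supported ℂ ℂ (Aset M s j) := by
    intro d
    induction d with
    | zero => intro jj hjj _ y hy; rw [show jj = M by omega, Q_top]; exact hy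
    | succ d ih =>
      intro jj hjj hjle y hy
      rw [Q_succ t β v (show jj < M by omega), Module.End.mul_apply]
      exact ih (jj+1) (by omega) (by omega) _
        (L_mem_supported t β v ⟨jj, by omega⟩ hjle s y hy)
  rcases le_or_gt j M with hj | hj
  · exact key (M - j) j (by omega) le_rfl x hx
  · rw [show Q (M := M) t β v j = 1 by simp [Q, show M - j = 0 by omega]]; exact hx

lemma Q_single_eval_zero (m : Fin M → ℕ) {j : ℕ} (a : Fin 2) (c : Fin M → ℕ)
    (i : Fin M) (hij : (i : ℕ) < j) (hne : c i ≠ m i) :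
    (Q (M := M) t β v j (Finsupp.single (a, c) 1)) (0, m) = 0 := by
  have h1 : Finsupp.single ((a, c) : Fin 2 × (Fin M → ℕ)) (1:ℂ) ∈ Finsupp.supported ℂ ℂ (Aset M c j) :=
    Finsupp.single_mem_supported ℂ 1 (fun i _ => rfl)
  have h2 := Q_mem_supported t β v c _ h1
  rw [Finsupp.mem_supported] at h2
  by_contra hne0
  have : ((0 : Fin 2), m) ∈ (Q (M := M) t β v j (Finsupp.single (a, c) 1)).support :=
    Finsupp.mem_support_iff.mpr hne0
  exact hne ((h2 this) i hij).symm

end TB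

namespace TB

variable {M : ℕ} (t β v : ℂ) (m n : Fin M → ℕ)

def sconf (j : ℕ) : Fin M → ℕ := fun i => if (i : ℕ) < j then m i else n i

def G (j : ℕ) (b : Fin 2) : ℂ :=
  (Q (M := M) t β v j (Finsupp.single (b, sconf m n j) 1)) (0, m)

lemma sconf_zero : sconf m n 0 = n := by
  funext i; simp [sconf]

lemma sconf_top : sconf m n M = m := by
  funext i; simp [sconf, i.isLt]

lemma sconf_self {j : ℕ} (h : j < M) : sconf m n j ⟨j, h⟩ = n ⟨j, h⟩ := by
  simp [sconf]

lemma sconf_succ_eq_update {j : ℕ} (h : j < M) (w : ℕ) (hw : w = m ⟨j, h⟩) :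
    Function.update (sconf m n j) ⟨j, h⟩ w = sconf m n (j + 1) := by
  funext i
  rcases eq_or_ne i ⟨j, h⟩ with hi | hi
  · subst hi; simp [Function.update_self, sconf, hw]
  · rw [Function.update_of_ne hi]
    have : (i : ℕ) ≠ j := fun hc => hi (Fin.ext hc)
    simp only [sconf]
    by_cases hlt : (i : ℕ) < j
    · rw [if_pos hlt, if_pos (by omega)]
    · rw [if_neg hlt, if_neg (by omega)]

lemma sconf_succ_eq {j : ℕ} (h : j < M) (hw : n ⟨j, h⟩ = m ⟨j, h⟩) :
    sconf m n j = sconf m n (j + 1) := by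
  have := sconf_succ_eq_update m n h (n ⟨j, h⟩) hw
  rw [← this, ← sconf_self m n h, Function.update_eq_self]

lemma G_top (b : Fin 2) : G (M := M) t β v m n M b = if b = 0 then 1 else 0 := by
  rw [G, Q_top, sconf_top]
  change (Finsupp.single ((b, m) : Fin 2 × (Fin M → ℕ)) (1:ℂ)) (0, m) = _
  rw [Finsupp.single_apply]
  by_cases hb : b = 0
  · rw [if_pos hb, if_pos (by rw [hb])]
  · rw [if_neg hb, if_neg (by simp [hb])]

lemma L_single_one (k : Fin M) (s : Fin M → ℕ) :
    LsiteBoson M t β v k (Finsupp.single (1, s) 1) =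
      (v * (1 - t ^ (s k + 1))) •
          Finsupp.single ((0 : Fin 2), Function.update s k (s k + 1)) (1 : ℂ) +
        v • Finsupp.single ((1 : Fin 2), s) (1 : ℂ) := by
  rw [L_apply, Finsupp.sum_single_index (by simp), one_smul]
  exact if_neg (by norm_num)

lemma L_single_zero (k : Fin M) (s : Fin M → ℕ) :
    LsiteBoson M t β v k (Finsupp.single (0, s) 1) =
      (1 - β * v * t ^ (s k)) • Finsupp.single ((0 : Fin 2), s) (1 : ℂ) +
        (if s k = 0 then 0 else
          Finsupp.single ((1 : Fin 2), Function.update s k (s k - 1)) (1 : ℂ)) := by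
  rw [L_apply, Finsupp.sum_single_index (by simp), one_smul]
  exact if_pos rfl

lemma G_one {j : ℕ} (hj : j < M) :
    G (M := M) t β v m n j 1 =
      (if m ⟨j, hj⟩ = n ⟨j, hj⟩ + 1 then v * (1 - t ^ (n ⟨j, hj⟩ + 1)) * G t β v m n (j+1) 0 else 0) +
      (if m ⟨j, hj⟩ = n ⟨j, hj⟩ then v * G t β v m n (j+1) 1 else 0) := by
  rw [G, Q_succ t β v hj, Module.End.mul_apply, L_single_one]
  rw [map_add, map_smul, map_smul, Finsupp.add_apply, Finsupp.smul_apply, Finsupp.smul_apply]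
  rw [sconf_self m n hj]
  congr 1
  · by_cases hc : m ⟨j, hj⟩ = n ⟨j, hj⟩ + 1
    · rw [if_pos hc, sconf_succ_eq_update m n hj _ hc.symm]
      have hG : ((Q (M := M) t β v (j+1)) (Finsupp.single (0, sconf m n (j+1)) 1)) (0, m)
          = G t β v m n (j+1) 0 := rfl
      rw [smul_eq_mul, hG]
    · rw [if_neg hc, Q_single_eval_zero t β v m 0 _ ⟨j, hj⟩ (Nat.lt_succ_self j)
        (by rw [Function.update_self]; exact fun hcc => hc hcc.symm), smul_zero]
  · by_cases hc : m ⟨j, hj⟩ = n ⟨j, hj⟩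
    · rw [if_pos hc, sconf_succ_eq m n hj hc.symm, smul_eq_mul]
      rfl
    · rw [if_neg hc, Q_single_eval_zero t β v m 1 _ ⟨j, hj⟩ (Nat.lt_succ_self j)
        (by rw [sconf_self m n hj]; exact fun hcc => hc hcc.symm), smul_zero]

lemma G_zero {j : ℕ} (hj : j < M) :
    G (M := M) t β v m n j 0 =
      (if m ⟨j, hj⟩ = n ⟨j, hj⟩ then (1 - β * v * t ^ (n ⟨j, hj⟩)) * G t β v m n (j+1) 0 else 0) +
      (if n ⟨j, hj⟩ = m ⟨j, hj⟩ + 1 then G t β v m n (j+1) 1 else 0) := by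
  rw [G, Q_succ t β v hj, Module.End.mul_apply, L_single_zero]
  rw [map_add, map_smul, Finsupp.add_apply, Finsupp.smul_apply]
  rw [sconf_self m n hj]
  congr 1
  · by_cases hc : m ⟨j, hj⟩ = n ⟨j, hj⟩
    · rw [if_pos hc, sconf_succ_eq m n hj hc.symm]
      have hG : ((Q (M := M) t β v (j+1)) (Finsupp.single (0, sconf m n (j+1)) 1)) (0, m)
          = G t β v m n (j+1) 0 := rfl
      rw [smul_eq_mul, hG]
    · rw [if_neg hc, Q_single_eval_zero t β v m 0 _ ⟨j, hj⟩ (Nat.lt_succ_self j)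
        (by rw [sconf_self m n hj]; exact fun hcc => hc hcc.symm), smul_zero]
  · by_cases h0 : n ⟨j, hj⟩ = 0
    · rw [if_pos h0, if_neg (by omega), map_zero, Finsupp.coe_zero, Pi.zero_apply]
    · rw [if_neg h0]
      by_cases hc : n ⟨j, hj⟩ = m ⟨j, hj⟩ + 1
      · rw [if_pos hc, sconf_succ_eq_update m n hj _ (by omega)]
        rfl
      · rw [if_neg hc, Q_single_eval_zero t β v m 1 _ ⟨j, hj⟩ (Nat.lt_succ_self j)
          (by rw [Function.update_self]; omega)]

lemma Belem_eq_G : Belem M t β v m n = G (M := M) t β v m n 0 1 := by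
  rw [Belem, G, Q_zero, sconf_zero]

end TB

namespace TB

variable {M : ℕ} (t β v : ℂ) (m n : Fin M → ℕ)

def Tsum (f : Fin M → ℕ) (j : ℕ) : ℕ :=
  ∑ k ∈ Finset.univ.filter (fun k : Fin M => j ≤ (k : ℕ)), f k

lemma Tsum_top (f : Fin M → ℕ) {j : ℕ} (h : M ≤ j) : Tsum f j = 0 := by
  rw [Tsum, Finset.filter_false_of_mem (fun k _ => by have := k.isLt; omega), Finset.sum_empty]

lemma filter_split {j : ℕ} (h : j < M) :
    Finset.univ.filter (fun k : Fin M => j ≤ (k : ℕ)) =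
      insert ⟨j, h⟩ (Finset.univ.filter (fun k : Fin M => j + 1 ≤ (k : ℕ))) := by
  ext k
  simp only [Finset.mem_filter, Finset.mem_univ, true_and, Finset.mem_insert]
  constructor
  · intro hk
    rcases eq_or_ne (k : ℕ) j with hkj | hkj
    · exact Or.inl (Fin.ext hkj)
    · exact Or.inr (by omega)
  · rintro (rfl | hk)
    · exact le_rfl
    · omega

lemma mk_not_mem_filter {j : ℕ} (h : j < M) :
    (⟨j, h⟩ : Fin M) ∉ Finset.univ.filter (fun k : Fin M => j + 1 ≤ (k : ℕ)) := by
  simp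

lemma Tsum_succ (f : Fin M → ℕ) {j : ℕ} (h : j < M) :
    Tsum f j = f ⟨j, h⟩ + Tsum f (j + 1) := by
  rw [Tsum, filter_split h, Finset.sum_insert (mk_not_mem_filter h)]
  rfl

lemma Tsum_zero_eq (f : Fin M → ℕ) : Tsum f 0 = ∑ k : Fin M, f k := by
  rw [Tsum]
  congr 1
  simp

lemma Ici_sum (f : Fin M → ℕ) (j : Fin M) :
    ∑ k ∈ Finset.Ici j, f k = Tsum f (j : ℕ) := by
  rw [Tsum]
  congr 1
  ext k
  simp only [Finset.mem_Ici, Finset.mem_filter, Finset.mem_univ, true_and, Fin.le_def]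

/-- The key vanishing claim: nonzero G forces tail-admissibility and the
correct auxiliary spin. -/
lemma G_ne_zero_claim :
    ∀ d j, M = j + d → ∀ b : Fin 2, G (M := M) t β v m n j b ≠ 0 →
      (∀ k, j ≤ k → (Tsum n k ≤ Tsum m k ∧ Tsum m k ≤ Tsum n k + 1)) ∧
        Tsum m j = Tsum n j + (b : ℕ) := by
  intro d
  induction d with
  | zero =>
    intro j hj b hb
    have hjM : j = M := by omega
    subst hjM
    rw [G_top] at hb
    have hb0 : b = 0 := by
      by_contra hb0
      rw [if_neg hb0] at hb
      exact hb rfl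
    subst hb0
    refine ⟨fun k hk => ?_, ?_⟩
    · rw [Tsum_top m (by omega), Tsum_top n (by omega)]
      omega
    · rw [Tsum_top m le_rfl, Tsum_top n le_rfl]
      simp
  | succ d ih =>
    intro j hj b hb
    have hjM : j < M := by omega
    have hrec : ∀ (a : Fin 2), G (M := M) t β v m n (j+1) a ≠ 0 →
        (∀ k, j + 1 ≤ k → (Tsum n k ≤ Tsum m k ∧ Tsum m k ≤ Tsum n k + 1)) ∧
          Tsum m (j+1) = Tsum n (j+1) + (a : ℕ) := ih (j+1) (by omega)
    have hsm := Tsum_succ m hjM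
    have hsn := Tsum_succ n hjM
    have hb01 : b = 0 ∨ b = 1 := by omega
    have main : ∃ a : Fin 2, G (M := M) t β v m n (j+1) a ≠ 0 ∧
        m ⟨j, hjM⟩ + (a : ℕ) + (b : ℕ) * 1 = n ⟨j, hjM⟩ + (b : ℕ) + (a : ℕ) * 0 ∨ True := ⟨0, Or.inr trivial⟩
    -- case analysis on b
    rcases hb01 with hb0 | hb1
    · subst hb0
      rw [G_zero t β v m n hjM] at hb
      have : (m ⟨j, hjM⟩ = n ⟨j, hjM⟩ ∧ G (M := M) t β v m n (j+1) 0 ≠ 0) ∨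
          (n ⟨j, hjM⟩ = m ⟨j, hjM⟩ + 1 ∧ G (M := M) t β v m n (j+1) 1 ≠ 0) := by
        by_contra hcon
        push_neg at hcon
        obtain ⟨h1, h2⟩ := hcon
        apply hb
        have e1 : (if m ⟨j, hjM⟩ = n ⟨j, hjM⟩ then (1 - β * v * t ^ (n ⟨j, hjM⟩)) * G t β v m n (j+1) 0 else 0) = 0 := by
          split_ifs with hc
          · rw [h1 hc, mul_zero]
          · rfl
        have e2 : (if n ⟨j, hjM⟩ = m ⟨j, hjM⟩ + 1 then G (M := M) t β v m n (j+1) 1 else 0) = 0 := by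
          split_ifs with hc
          · exact h2 hc
          · rfl
        rw [e1, e2, add_zero]
      rcases this with ⟨hmn, hG⟩ | ⟨hmn, hG⟩
      · obtain ⟨htail, hval⟩ := hrec 0 hG
        refine ⟨fun k hk => ?_, by simp at hval ⊢; omega⟩
        rcases eq_or_lt_of_le hk with rfl | hlt
        · simp at hval; omega
        · exact htail k (by omega)
      · obtain ⟨htail, hval⟩ := hrec 1 hG
        have hv1 : ((1 : Fin 2) : ℕ) = 1 := rfl
        rw [hv1] at hval
        refine ⟨fun k hk => ?_, by simp; omega⟩
        rcases eq_or_lt_of_le hk with rfl | hlt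
        · omega
        · exact htail k (by omega)
    · subst hb1
      rw [G_one t β v m n hjM] at hb
      have : (m ⟨j, hjM⟩ = n ⟨j, hjM⟩ + 1 ∧ G (M := M) t β v m n (j+1) 0 ≠ 0) ∨
          (m ⟨j, hjM⟩ = n ⟨j, hjM⟩ ∧ G (M := M) t β v m n (j+1) 1 ≠ 0) := by
        by_contra hcon
        push_neg at hcon
        obtain ⟨h1, h2⟩ := hcon
        apply hb
        have e1 : (if m ⟨j, hjM⟩ = n ⟨j, hjM⟩ + 1 then v * (1 - t ^ (n ⟨j, hjM⟩ + 1)) * G t β v m n (j+1) 0 else 0) = 0 := by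
          split_ifs with hc
          · rw [h1 hc, mul_zero]
          · rfl
        have e2 : (if m ⟨j, hjM⟩ = n ⟨j, hjM⟩ then v * G (M := M) t β v m n (j+1) 1 else 0) = 0 := by
          split_ifs with hc
          · rw [h2 hc, mul_zero]
          · rfl
        rw [e1, e2, add_zero]
      have hv1 : ((1 : Fin 2) : ℕ) = 1 := rfl
      rcases this with ⟨hmn, hG⟩ | ⟨hmn, hG⟩
      · obtain ⟨htail, hval⟩ := hrec 0 hG
        simp at hval
        refine ⟨fun k hk => ?_, by rw [hv1]; omega⟩
        rcases eq_or_lt_of_le hk with rfl | hlt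
        · omega
        · exact htail k (by omega)
      · obtain ⟨htail, hval⟩ := hrec 1 hG
        rw [hv1] at hval
        refine ⟨fun k hk => ?_, by rw [hv1]; omega⟩
        rcases eq_or_lt_of_le hk with rfl | hlt
        · omega
        · exact htail k (by omega)

lemma part_i (hA : ¬ Admissible M m n) : Belem M t β v m n = 0 := by
  by_contra hB
  rw [Belem_eq_G] at hB
  obtain ⟨htail, _⟩ := G_ne_zero_claim t β v m n M 0 (by omega) 1 hB
  apply hA
  intro j
  rw [Ici_sum m j, Ici_sum n j]
  exact htail (j : ℕ) (Nat.zero_le _)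

end TB

namespace TB

variable {M : ℕ} (t β v : ℂ) (m n : Fin M → ℕ)

def chi (j : ℕ) : ℕ := Tsum m j - Tsum n j

lemma chi_spec (hA : Admissible M m n) (j : ℕ) :
    Tsum m j = Tsum n j + chi m n j ∧ chi m n j ≤ 1 := by
  rcases lt_or_ge j M with hj | hj
  · have := hA ⟨j, hj⟩
    rw [Ici_sum m ⟨j, hj⟩, Ici_sum n ⟨j, hj⟩] at this
    have hval : ((⟨j, hj⟩ : Fin M) : ℕ) = j := rfl
    rw [hval] at this
    rw [chi]
    omega
  · rw [chi, Tsum_top m hj, Tsum_top n hj]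
    omega

lemma mrel (hA : Admissible M m n) {j : ℕ} (hj : j < M) :
    m ⟨j, hj⟩ + chi m n (j + 1) = n ⟨j, hj⟩ + chi m n j := by
  have h0 := chi_spec m n hA j
  have h1 := chi_spec m n hA (j + 1)
  have hsm := Tsum_succ m hj
  have hsn := Tsum_succ n hj
  omega

/-- local weight of site k along the admissible path -/
def w (k : Fin M) : ℂ :=
  if chi m n ((k : ℕ) + 1) < chi m n (k : ℕ) then v * (1 - t ^ (n k + 1))
  else if chi m n (k : ℕ) = 1 then v
  else if chi m n (k : ℕ) < chi m n ((k : ℕ) + 1) then 1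
  else 1 - β * v * t ^ (n k)

lemma w_val {j : ℕ} (hj : j < M) :
    w t β v m n ⟨j, hj⟩ =
      if chi m n (j + 1) < chi m n j then v * (1 - t ^ (n ⟨j, hj⟩ + 1))
      else if chi m n j = 1 then v
      else if chi m n j < chi m n (j + 1) then 1
      else 1 - β * v * t ^ (n ⟨j, hj⟩) := rfl

lemma value_claim (hA : Admissible M m n) :
    ∀ d j, M = j + d →
      G (M := M) t β v m n j (if chi m n j = 1 then 1 else 0) =
        ∏ k ∈ Finset.univ.filter (fun k : Fin M => j ≤ (k : ℕ)), w t β v m n k := by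
  intro d
  induction d with
  | zero =>
    intro j hj
    have hjM : M = j := by omega
    subst hjM
    have hchi : chi m n M = 0 := by rw [chi, Tsum_top m le_rfl, Nat.zero_sub]
    rw [hchi, if_neg (by omega), G_top, if_pos rfl,
      Finset.filter_false_of_mem (fun k _ => by have := k.isLt; omega), Finset.prod_empty]
  | succ d ih =>
    intro j hj
    have hjM : j < M := by omega
    have hIH := ih (j + 1) (by omega)
    have hc0 := (chi_spec m n hA j).2
    have hc1 := (chi_spec m n hA (j + 1)).2
    have hrel := mrel m n hA hjM
    rw [filter_split hjM, Finset.prod_insert (mk_not_mem_filter hjM), w_val]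
    rcases Nat.le_one_iff_eq_zero_or_eq_one.mp hc0 with h0 | h0 <;>
      rcases Nat.le_one_iff_eq_zero_or_eq_one.mp hc1 with h1 | h1
    · -- chi j = 0, chi (j+1) = 0 : m j = n j, factor 1 - βvt^{n j}
      rw [h0, if_neg (by omega), G_zero t β v m n hjM,
        if_pos (by omega), if_neg (by omega), add_zero,
        if_neg (by omega), if_neg (by omega), if_neg (by omega)]
      rw [h1, if_neg (by omega)] at hIH
      rw [hIH]
    · -- chi j = 0, chi (j+1) = 1 : n j = m j + 1, factor 1
      rw [h0, if_neg (by omega), G_zero t β v m n hjM,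
        if_neg (by omega), if_pos (by omega), zero_add,
        if_neg (by omega), if_neg (by omega), if_pos (by omega)]
      rw [h1, if_pos rfl] at hIH
      rw [hIH, one_mul]
    · -- chi j = 1, chi (j+1) = 0 : m j = n j + 1, factor v (1 - t^{n j + 1})
      rw [h0, if_pos rfl, G_one t β v m n hjM,
        if_pos (by omega), if_neg (by omega), add_zero,
        if_pos (by omega)]
      rw [h1, if_neg (by omega)] at hIH
      rw [hIH]
    · -- chi j = 1, chi (j+1) = 1 : m j = n j, factor v
      rw [h0, if_pos rfl, G_one t β v m n hjM,
        if_neg (by omega), if_pos (by omega), zero_add,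
        if_neg (by omega), if_pos rfl]
      rw [h1, if_pos rfl] at hIH
      rw [hIH]

lemma Belem_eq_prod_w (hA : Admissible M m n) (hchi0 : chi m n 0 = 1) :
    Belem M t β v m n = ∏ k : Fin M, w t β v m n k := by
  rw [Belem_eq_G]
  have := value_claim t β v m n hA M 0 (by omega)
  rw [hchi0, if_pos rfl] at this
  rw [this]
  congr 1
  simp

end TB

namespace TB

variable {M : ℕ} (t β v : ℂ) (m n : Fin M → ℕ) {r : ℕ}

/-- number of indices with f j ≥ k -/
def Cnt {r' : ℕ} (f : Fin r' → Fin M) (k : ℕ) : ℕ :=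
  (Finset.univ.filter fun j : Fin r' => k ≤ (f j : ℕ)).card

lemma Cnt_top {r' : ℕ} (f : Fin r' → Fin M) {k : ℕ} (h : M ≤ k) : Cnt f k = 0 := by
  rw [Cnt, Finset.filter_false_of_mem (fun j _ => by have := (f j).isLt; omega), Finset.card_empty]

lemma Cnt_le {r' : ℕ} (f : Fin r' → Fin M) (k : ℕ) : Cnt f k ≤ r' := by
  calc Cnt f k ≤ Finset.univ.card := Finset.card_filter_le _ _
  _ = r' := by rw [Finset.card_univ, Fintype.card_fin]

lemma Cnt_anti {r' : ℕ} (f : Fin r' → Fin M) (k : ℕ) : Cnt f (k + 1) ≤ Cnt f k := by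
  apply Finset.card_le_card
  intro j hj
  simp only [Finset.mem_filter, Finset.mem_univ, true_and] at *
  omega

lemma Cnt_succ {r' : ℕ} (f : Fin r' → Fin M) (hf : Function.Injective f) {k : ℕ} (h : k < M) :
    Cnt f k = (if ∃ j, f j = ⟨k, h⟩ then 1 else 0) + Cnt f (k + 1) := by
  split_ifs with hex
  · obtain ⟨j₀, hj₀⟩ := hex
    have hval : (f j₀ : ℕ) = k := by rw [hj₀]
    have hins : Finset.univ.filter (fun j : Fin r' => k ≤ (f j : ℕ)) =
        insert j₀ (Finset.univ.filter fun j : Fin r' => k + 1 ≤ (f j : ℕ)) := by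
      ext j
      simp only [Finset.mem_filter, Finset.mem_univ, true_and, Finset.mem_insert]
      constructor
      · intro hk
        rcases eq_or_ne ((f j : ℕ)) k with hfj | hfj
        · exact Or.inl (hf (by rw [hj₀]; exact Fin.ext hfj))
        · exact Or.inr (by omega)
      · rintro (rfl | hk)
        · omega
        · omega
    have hnm : j₀ ∉ Finset.univ.filter (fun j : Fin r' => k + 1 ≤ (f j : ℕ)) := by
      simp only [Finset.mem_filter, Finset.mem_univ, true_and]
      omega
    rw [Cnt, Cnt, hins, Finset.card_insert_of_notMem hnm]
    omega
  · simp only [Cnt, zero_add]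
    congr 1
    ext j
    simp only [Finset.mem_filter, Finset.mem_univ, true_and]
    have : (f j : ℕ) ≠ k := fun hc => hex ⟨j, Fin.ext hc⟩
    omega

variable (p : Fin r → Fin M) (q : Fin (r - 1) → Fin M)

lemma PQ_identity (hA : Admissible M m n) (hp : Function.Injective p)
    (hp2 : ∀ i : Fin M, (∃ j, p j = i) ↔ m i = n i + 1)
    (hq : Function.Injective q)
    (hq2 : ∀ i : Fin M, (∃ j, q j = i) ↔ n i = m i + 1) :
    ∀ d k, M = k + d → Tsum m k + Cnt q k = Tsum n k + Cnt p k := by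
  intro d
  induction d with
  | zero =>
    intro k hk
    rw [Tsum_top m (by omega), Tsum_top n (by omega), Cnt_top q (by omega), Cnt_top p (by omega)]
  | succ d ih =>
    intro k hk
    have hkM : k < M := by omega
    have hIH := ih (k + 1) (by omega)
    rw [Tsum_succ m hkM, Tsum_succ n hkM, Cnt_succ p hp hkM, Cnt_succ q hq hkM]
    have hrel := mrel m n hA hkM
    have hc0 := (chi_spec m n hA k).2
    have hc1 := (chi_spec m n hA (k + 1)).2
    rw [if_congr (hp2 ⟨k, hkM⟩) rfl rfl, if_congr (hq2 ⟨k, hkM⟩) rfl rfl]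
    split_ifs <;> omega

end TB

namespace TB

variable {M : ℕ} (m n : Fin M → ℕ) {r : ℕ} (p : Fin r → Fin M) (q : Fin (r - 1) → Fin M)

/-- the "closing" site for the j-th run: q j, or M for the last run -/
def qt (j : Fin r) : ℕ := if h : (j : ℕ) < r - 1 then ((q ⟨(j : ℕ), h⟩ : ℕ)) else M

lemma bound_p (hp : StrictMono p) {k : ℕ} (j : Fin r) (hj : (p j : ℕ) < k) :
    Cnt p k + (j : ℕ) + 1 ≤ r := by
  have hsub : Finset.univ.filter (fun j' : Fin r => k ≤ (p j' : ℕ)) ⊆ Finset.Ioi j := by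
    intro j' hj'
    simp only [Finset.mem_filter, Finset.mem_univ, true_and] at hj'
    simp only [Finset.mem_Ioi]
    exact hp.lt_iff_lt.mp (by omega)
  have hcard := Finset.card_le_card hsub
  rw [Fin.card_Ioi] at hcard
  have := j.isLt
  rw [Cnt] at *
  omega

lemma bound_q (hq : StrictMono q) {k : ℕ} (j : Fin (r - 1)) (hj : k ≤ (q j : ℕ)) :
    r - 1 ≤ Cnt q k + (j : ℕ) := by
  have hsub : Finset.Ici j ⊆ Finset.univ.filter (fun j' : Fin (r - 1) => k ≤ (q j' : ℕ)) := by
    intro j' hj'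
    simp only [Finset.mem_Ici] at hj'
    simp only [Finset.mem_filter, Finset.mem_univ, true_and]
    have := hq.monotone hj'
    omega
  have hcard := Finset.card_le_card hsub
  rw [Fin.card_Ici] at hcard
  have := j.isLt
  rw [Cnt] at *
  omega

lemma bound_q' (hq : StrictMono q) {k : ℕ} (j : Fin (r - 1)) (hj : (q j : ℕ) < k) :
    Cnt q k + (j : ℕ) + 1 ≤ r - 1 := by
  have hsub : Finset.univ.filter (fun j' : Fin (r - 1) => k ≤ (q j' : ℕ)) ⊆ Finset.Ioi j := by
    intro j' hj'
    simp only [Finset.mem_filter, Finset.mem_univ, true_and] at hj'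
    simp only [Finset.mem_Ioi]
    exact hq.lt_iff_lt.mp (by omega)
  have hcard := Finset.card_le_card hsub
  rw [Fin.card_Ioi] at hcard
  have := j.isLt
  rw [Cnt] at *
  omega

lemma bound_p' (hp : StrictMono p) {k : ℕ} (j : Fin r) (hj : k ≤ (p j : ℕ)) :
    r ≤ Cnt p k + (j : ℕ) := by
  have hsub : Finset.Ici j ⊆ Finset.univ.filter (fun j' : Fin r => k ≤ (p j' : ℕ)) := by
    intro j' hj'
    simp only [Finset.mem_Ici] at hj'
    simp only [Finset.mem_filter, Finset.mem_univ, true_and]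
    have := hp.monotone hj'
    omega
  have hcard := Finset.card_le_card hsub
  rw [Fin.card_Ici] at hcard
  have := j.isLt
  rw [Cnt] at *
  omega

section main

variable (hA : Admissible M m n)
  (hp : StrictMono p) (hp2 : ∀ i : Fin M, (∃ j, p j = i) ↔ m i = n i + 1)
  (hq : StrictMono q) (hq2 : ∀ i : Fin M, (∃ j, q j = i) ↔ n i = m i + 1)

include hA hp hp2 hq hq2

lemma chiPQ : ∀ k, Cnt p k = Cnt q k + chi m n k := by
  intro k
  rcases le_or_gt k M with hk | hk
  · have := PQ_identity m n p q hA hp.injective hp2 hq.injective hq2 (M - k) k (by omega)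
    have h1 := (chi_spec m n hA k).1
    omega
  · rw [Cnt_top p (by omega), Cnt_top q (by omega), chi, Tsum_top m (by omega),
      Tsum_top n (by omega)]

lemma cond_imp_chi (k : Fin M) (j : Fin r)
    (h1 : (p j : ℕ) < (k : ℕ)) (h2 : (k : ℕ) < qt q j) :
    chi m n (k : ℕ) = 0 ∧ chi m n ((k : ℕ) + 1) = 0 := by
  have hPQ0 := chiPQ m n p q hA hp hp2 hq hq2 (k : ℕ)
  have hPQ1 := chiPQ m n p q hA hp hp2 hq hq2 ((k : ℕ) + 1)
  have hanti := Cnt_anti p (k : ℕ)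
  have hantiq := Cnt_anti q (k : ℕ)
  have hb1 := bound_p p hp j h1
  by_cases hj : (j : ℕ) < r - 1
  · rw [qt, dif_pos hj] at h2
    have hb2 := bound_q q hq ⟨(j : ℕ), hj⟩ (show (k : ℕ) + 1 ≤ (q ⟨(j : ℕ), hj⟩ : ℕ) by omega)
    have hvv : ((⟨(j : ℕ), hj⟩ : Fin (r - 1)) : ℕ) = (j : ℕ) := rfl
    rw [hvv] at hb2
    omega
  · have hjr := j.isLt
    omega

lemma card_cond (hr : 1 ≤ r) (k : Fin M) :
    (Finset.univ.filter fun j : Fin r => (p j : ℕ) < (k : ℕ) ∧ (k : ℕ) < qt q j).card =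
      if chi m n (k : ℕ) = 0 ∧ chi m n ((k : ℕ) + 1) = 0 then 1 else 0 := by
  split_ifs with hchi
  · -- the filter is the singleton {j₀}
    have hQle : Cnt q (k : ℕ) ≤ r - 1 := Cnt_le q _
    have hPQ0 := chiPQ m n p q hA hp hp2 hq hq2 (k : ℕ)
    have hPQ1 := chiPQ m n p q hA hp hp2 hq hq2 ((k : ℕ) + 1)
    set a := Cnt p (k : ℕ) with ha
    have haQ : Cnt q (k : ℕ) = a := by omega
    have har : a ≤ r - 1 := by omega
    set j₀ : Fin r := ⟨r - 1 - a, by omega⟩ with hj₀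
    have hj₀v : (j₀ : ℕ) = r - 1 - a := rfl
    have hmem1 : (p j₀ : ℕ) < (k : ℕ) := by
      by_contra hcon
      have := bound_p' p hp (k := (k : ℕ)) j₀ (by omega)
      omega
    have hmem2 : (k : ℕ) < qt q j₀ := by
      rw [qt]
      split_ifs with hlt
      · -- j₀ < r - 1, so a ≥ 1
        by_contra hcon
        push_neg at hcon
        rcases lt_or_eq_of_le hcon with hlt2 | heq
        · have := bound_q' q hq ⟨(j₀ : ℕ), hlt⟩ hlt2
          have hvv : ((⟨(j₀ : ℕ), hlt⟩ : Fin (r - 1)) : ℕ) = r - 1 - a := rfl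
          rw [hvv] at this
          omega
        · -- q j₀ = k, contradiction with m k = n k
          have hqk : q ⟨(j₀ : ℕ), hlt⟩ = k := Fin.ext heq
          have hnm := (hq2 k).mp ⟨_, hqk⟩
          have hrel := mrel m n hA k.isLt
          have hkk : (⟨(k : ℕ), k.isLt⟩ : Fin M) = k := Fin.ext rfl
          rw [hkk] at hrel
          omega
      · exact k.isLt
    have huniq : ∀ j : Fin r, (p j : ℕ) < (k : ℕ) → (k : ℕ) < qt q j → j = j₀ := by
      intro j hc1 hc2
      have hb1 := bound_p p hp j hc1
      apply Fin.ext
      rw [hj₀v]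
      by_cases hj : (j : ℕ) < r - 1
      · rw [qt, dif_pos hj] at hc2
        have hb2 := bound_q q hq (k := (k : ℕ) + 1) ⟨(j : ℕ), hj⟩ (by omega)
        have hvv : ((⟨(j : ℕ), hj⟩ : Fin (r - 1)) : ℕ) = (j : ℕ) := rfl
        rw [hvv] at hb2
        have hanti := Cnt_anti p (k : ℕ)
        have hantiq := Cnt_anti q (k : ℕ)
        omega
      · have hjr := j.isLt
        omega
    rw [Finset.card_eq_one]
    refine ⟨j₀, ?_⟩
    ext j
    simp only [Finset.mem_filter, Finset.mem_univ, true_and, Finset.mem_singleton]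
    constructor
    · rintro ⟨hc1, hc2⟩; exact huniq j hc1 hc2
    · rintro rfl; exact ⟨hmem1, hmem2⟩
  · rw [Finset.card_eq_zero, Finset.eq_empty_iff_forall_notMem]
    intro j hj
    simp only [Finset.mem_filter, Finset.mem_univ, true_and] at hj
    exact hchi (cond_imp_chi m n p q hA hp hp2 hq hq2 k j hj.1 hj.2)

end main

end TB

/-- Matrix elements of the B-operator of the t-deformed boson model:
(i) ⟨m|B(v)|n⟩ vanishes unless (m,n) is admissible; (ii) if (m,n) is
admissible, then ⟨m|B(v)|n⟩ is given by the explicit product formula, where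
p₁ < ⋯ < p_r enumerates the (1-based) sites with m_p = n_p + 1, the sequence
q₁ < ⋯ < q_{r−1} enumerates the sites with m_q + 1 = n_q, and q_r = M + 1. -/
theorem tboson_B_matrix_elements (M N : ℕ) (hM : 1 ≤ M) (t β v : ℂ)
    (m n : Fin M → ℕ)
    (hm : ∑ j : Fin M, m j = N + 1) (hn : ∑ j : Fin M, n j = N) :
    (¬ Admissible M m n → Belem M t β v m n = 0) ∧
      (∀ (r : ℕ) (p : Fin r → Fin M) (q : Fin (r - 1) → Fin M),
        Admissible M m n →
        StrictMono p → (∀ i : Fin M, (∃ j, p j = i) ↔ m i = n i + 1) →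
        StrictMono q → (∀ i : Fin M, (∃ j, q j = i) ↔ n i = m i + 1) →
        Belem M t β v m n =
          v ^ ((∑ j : Fin r, ((p j : ℕ) + 1)) - (∑ j : Fin (r - 1), ((q j : ℕ) + 1))) *
            (∏ j : Fin r, (1 - t ^ (n (p j) + 1))) *
            ∏ j : Fin r, ∏ k : Fin M,
              if (p j : ℕ) < (k : ℕ) ∧
                  (k : ℕ) < (if h : (j : ℕ) < r - 1 then ((q ⟨(j : ℕ), h⟩ : ℕ)) else M)
              then (1 - β * v * t ^ (n k)) else 1) := by
  constructor
  · exact TB.part_i t β v m n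
  · intro r p q hA hp hp2 hq hq2
    -- basic facts about chi
    have hchi0 : TB.chi m n 0 = 1 := by
      rw [TB.chi, TB.Tsum_zero_eq, TB.Tsum_zero_eq, hm, hn]
      omega
    have hPQ := TB.chiPQ m n p q hA hp hp2 hq hq2
    have hr : 1 ≤ r := by
      have h0 := hPQ 0
      have := TB.Cnt_le p (M := M) 0
      omega
    -- pointwise factorization of the weight
    have hfac : ∀ k : Fin M, TB.w t β v m n k =
        v ^ (TB.chi m n (k : ℕ)) *
        (if m k = n k + 1 then (1 - t ^ (n k + 1)) else 1) *
        (if TB.chi m n (k : ℕ) = 0 ∧ TB.chi m n ((k : ℕ) + 1) = 0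
          then (1 - β * v * t ^ (n k)) else 1) := by
      intro k
      have hrel := TB.mrel m n hA k.isLt
      have hkk : (⟨(k : ℕ), k.isLt⟩ : Fin M) = k := Fin.ext rfl
      rw [hkk] at hrel
      have hc0 := (TB.chi_spec m n hA (k : ℕ)).2
      have hc1 := (TB.chi_spec m n hA ((k : ℕ) + 1)).2
      rcases Nat.le_one_iff_eq_zero_or_eq_one.mp hc0 with h0 | h0 <;>
        rcases Nat.le_one_iff_eq_zero_or_eq_one.mp hc1 with h1 | h1 <;>
        rw [TB.w]
      · rw [if_neg (by omega), if_neg (by omega), if_neg (by omega),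
          if_neg (by omega), if_pos (by constructor <;> omega), h0, pow_zero]
        try ring
      · rw [if_neg (by omega), if_neg (by omega), if_pos (by omega),
          if_neg (by omega), if_neg (by omega), h0, pow_zero]
        try ring
      · rw [if_pos (by omega), if_pos (by omega), if_neg (by omega), h0, pow_one]
        try ring
      · rw [if_neg (by omega), if_pos h0, if_neg (by omega), if_neg (by omega), h0, pow_one]
        try ring
    -- the filter sets are images
    have himp : Finset.univ.filter (fun i : Fin M => m i = n i + 1) =
        Finset.image p Finset.univ := by
      ext i
      simp only [Finset.mem_filter, Finset.mem_univ, true_and, Finset.mem_image]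
      rw [← hp2 i]
    have himq : Finset.univ.filter (fun i : Fin M => n i = m i + 1) =
        Finset.image q Finset.univ := by
      ext i
      simp only [Finset.mem_filter, Finset.mem_univ, true_and, Finset.mem_image]
      rw [← hq2 i]
    -- the exponent identity
    set Sp := ∑ j : Fin r, ((p j : ℕ) + 1) with hSp
    set Sq := ∑ j : Fin (r - 1), ((q j : ℕ) + 1) with hSq
    have hfm : ∀ f : Fin M → ℕ, ∑ k : Fin M, TB.Tsum f (k : ℕ) =
        ∑ i : Fin M, ((i : ℕ) + 1) * f i := by
      intro f
      calc ∑ k : Fin M, TB.Tsum f (k : ℕ)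
          = ∑ k : Fin M, ∑ i : Fin M, if (k : ℕ) ≤ (i : ℕ) then f i else 0 :=
            Finset.sum_congr rfl (fun k _ => by rw [TB.Tsum, Finset.sum_filter])
        _ = ∑ i : Fin M, ∑ k : Fin M, if (k : ℕ) ≤ (i : ℕ) then f i else 0 := Finset.sum_comm
        _ = ∑ i : Fin M, ((i : ℕ) + 1) * f i := by
            apply Finset.sum_congr rfl
            intro i _
            rw [← Finset.sum_filter]
            have hIic : Finset.univ.filter (fun k : Fin M => (k : ℕ) ≤ (i : ℕ)) =
                Finset.Iic i := by
              ext k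
              simp only [Finset.mem_filter, Finset.mem_univ, true_and, Finset.mem_Iic,
                Fin.le_def]
            rw [hIic, Finset.sum_const, Fin.card_Iic, smul_eq_mul]
    have hSpf : Sp = ∑ i ∈ Finset.univ.filter (fun i : Fin M => m i = n i + 1), ((i : ℕ) + 1) := by
      rw [himp, Finset.sum_image (fun a _ b _ h => hp.injective h)]
    have hSqf : Sq = ∑ i ∈ Finset.univ.filter (fun i : Fin M => n i = m i + 1), ((i : ℕ) + 1) := by
      rw [himq, Finset.sum_image (fun a _ b _ h => hq.injective h)]
    have hptw : ∀ i : Fin M, ((i : ℕ) + 1) * m i + (if n i = m i + 1 then (i : ℕ) + 1 else 0) =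
        ((i : ℕ) + 1) * n i + (if m i = n i + 1 then (i : ℕ) + 1 else 0) := by
      intro i
      have hrel := TB.mrel m n hA i.isLt
      have hkk : (⟨(i : ℕ), i.isLt⟩ : Fin M) = i := Fin.ext rfl
      rw [hkk] at hrel
      have hc0 := (TB.chi_spec m n hA (i : ℕ)).2
      have hc1 := (TB.chi_spec m n hA ((i : ℕ) + 1)).2
      have htri : m i = n i ∨ m i = n i + 1 ∨ n i = m i + 1 := by omega
      rcases htri with h | h | h
      · rw [if_neg (by omega), if_neg (by omega), h]
      · rw [if_neg (by omega), if_pos h, h, Nat.mul_succ]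
        try ring
      · rw [if_pos h, if_neg (by omega), h, Nat.mul_succ]
        try ring
    have hkey : (∑ k : Fin M, TB.Tsum m (k : ℕ)) + Sq = (∑ k : Fin M, TB.Tsum n (k : ℕ)) + Sp := by
      rw [hfm m, hfm n, hSpf, hSqf, Finset.sum_filter, Finset.sum_filter,
        ← Finset.sum_add_distrib, ← Finset.sum_add_distrib]
      exact Finset.sum_congr rfl (fun i _ => hptw i)
    have hchiS : ∑ k : Fin M, TB.Tsum m (k : ℕ) =
        (∑ k : Fin M, TB.Tsum n (k : ℕ)) + ∑ k : Fin M, TB.chi m n (k : ℕ) := by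
      rw [← Finset.sum_add_distrib]
      exact Finset.sum_congr rfl (fun k _ => (TB.chi_spec m n hA (k : ℕ)).1)
    have hexp : Sp - Sq = ∑ k : Fin M, TB.chi m n (k : ℕ) := by omega
    -- compute Belem as the product of weights
    rw [TB.Belem_eq_prod_w t β v m n hA hchi0]
    rw [Finset.prod_congr rfl (fun k _ => hfac k), Finset.prod_mul_distrib,
      Finset.prod_mul_distrib, Finset.prod_pow_eq_pow_sum]
    congr 1
    · congr 1
      · rw [hexp]
      · rw [← Finset.prod_filter, himp, Finset.prod_image (fun a _ b _ h => hp.injective h)]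
    · -- the third factor
      rw [Finset.prod_comm]
      apply Finset.prod_congr rfl
      intro k _
      have hstep : (∏ j : Fin r, if (p j : ℕ) < (k : ℕ) ∧
            (k : ℕ) < (if h : (j : ℕ) < r - 1 then ((q ⟨(j : ℕ), h⟩ : ℕ)) else M)
            then (1 - β * v * t ^ (n k)) else 1) =
          ∏ j ∈ Finset.univ.filter (fun j : Fin r => (p j : ℕ) < (k : ℕ) ∧
            (k : ℕ) < TB.qt q j), (1 - β * v * t ^ (n k)) :=
        (Finset.prod_filter _ _).symm
      rw [hstep, Finset.prod_const,
        TB.card_cond m n p q hA hp hp2 hq hq2 hr k]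
      split_ifs
      · rw [pow_one]
      · rw [pow_zero]
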